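/- If γ is a symmetric unimodal density with γ(u) ≥ γ(0) e^{-Λ|u|} for all u, and g = γ ⋆ φ is its convolution with the standard normal density φ, then there exist constants 0 < c ≤ C such that c·γ(x) ≤ g(x) ≤ C·γ(x) for all x ≥ 0. -/
import Mathlib


open Real MeasureTheory

noncomputable def stdNormalPDF : ℝ → ℝ :=
  fun x => (Real.sqrt (2 * Real.pi))⁻¹ * Real.exp (-x ^ 2 / 2)

theorem conv_comparable_to_gamma
    (γ : ℝ → ℝ) (Λ : ℝ)
    (hγpos : ∀ x, 0 < γ x)
    (hγdens : ∫ x, γ x = 1)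
    (hsym : ∀ x, γ (-x) = γ x)
    (hunimodal : AntitoneOn γ (Set.Ici (0 : ℝ)))
    (hdiff : Differentiable ℝ γ)
    (hlogderiv : ∀ u > (0 : ℝ), |deriv (fun x => Real.log (γ x)) u| ≤ Λ)
    (hlb : ∀ u : ℝ, γ u ≥ γ 0 * Real.exp (-Λ * |u|))
    (g : ℝ → ℝ)
    (hg : ∀ x, g x = ∫ u, stdNormalPDF (x - u) * γ u) :
    ∃ c C : ℝ, 0 < c ∧ c ≤ C ∧
      ∀ x ≥ (0 : ℝ), c * γ x ≤ g x ∧ g x ≤ C * γ x := by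
  have hγne : ∀ x : ℝ, γ x ≠ 0 := fun x => (hγpos x).ne'
  have hγcont : Continuous γ := hdiff.continuous
  have hΛ0 : 0 ≤ Λ := le_trans (abs_nonneg _) (hlogderiv 1 one_pos)
  set f : ℝ → ℝ := fun x => Real.log (γ x) with hfdef
  have hfd : Differentiable ℝ f := fun x => (hdiff x).log (hγne x)
  have hfeven : (fun x => f (-x)) = f := funext fun x => by simp [hfdef, hsym]
  have hγeven : (fun x => γ (-x)) = γ := funext hsym
  -- deriv γ 0 = 0
  have hγ0 : deriv γ 0 = 0 := by
    have h := deriv_comp_neg (f := γ) (x := (0 : ℝ))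
    rw [hγeven] at h
    simp only [neg_zero] at h
    linarith
  -- bound on deriv f everywhere
  have hbound : ∀ u : ℝ, ‖deriv f u‖ ≤ Λ := by
    intro u
    rcases lt_trichotomy u 0 with h | h | h
    · have hderiv : deriv f u = -deriv f (-u) := by
        have h2 := deriv_comp_neg (f := f) (x := u)
        rw [hfeven] at h2
        exact h2
      rw [Real.norm_eq_abs, hderiv, abs_neg]
      exact hlogderiv (-u) (by linarith)
    · subst h
      have : deriv f 0 = deriv γ 0 / γ 0 := deriv.log (hdiff 0) (hγne 0)
      rw [Real.norm_eq_abs, this, hγ0, zero_div, abs_zero]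
      exact hΛ0
    · rw [Real.norm_eq_abs]; exact hlogderiv u h
  -- Lipschitz bound for f
  have hlip : ∀ x y : ℝ, |f y - f x| ≤ Λ * |y - x| := by
    intro x y
    have h := convex_univ.norm_image_sub_le_of_norm_deriv_le
      (fun z _ => hfd z) (fun z _ => hbound z) (Set.mem_univ x) (Set.mem_univ y)
    simpa [Real.norm_eq_abs] using h
  -- comparison of γ at two points
  have hcomp : ∀ x u : ℝ, γ x * Real.exp (-(Λ * |x - u|)) ≤ γ u ∧
      γ u ≤ γ x * Real.exp (Λ * |x - u|) := by
    intro x u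
    have h := hlip x u
    rw [abs_sub_comm u x] at h
    rw [abs_le] at h
    have e1 : Real.exp (f x) = γ x := Real.exp_log (hγpos x)
    have e2 : Real.exp (f u) = γ u := Real.exp_log (hγpos u)
    constructor
    · calc γ x * Real.exp (-(Λ * |x - u|))
          = Real.exp (f x + -(Λ * |x - u|)) := by rw [Real.exp_add, e1]
        _ ≤ Real.exp (f u) := Real.exp_le_exp.2 (by linarith [h.2])
        _ = γ u := e2
    · calc γ u = Real.exp (f u) := e2.symm
        _ ≤ Real.exp (f x + Λ * |x - u|) := Real.exp_le_exp.2 (by linarith [h.1])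
        _ = γ x * Real.exp (Λ * |x - u|) := by rw [Real.exp_add, e1]
  -- the kernels
  set K : ℝ → ℝ := fun v => stdNormalPDF v * Real.exp (Λ * |v|) with hKdef
  set k : ℝ → ℝ := fun v => stdNormalPDF v * Real.exp (-(Λ * |v|)) with hkdef
  have hsqrt_pos : (0 : ℝ) < Real.sqrt (2 * Real.pi) :=
    Real.sqrt_pos.2 (by positivity)
  have hφpos : ∀ v, 0 < stdNormalPDF v := fun v => by
    unfold stdNormalPDF; positivity
  have hφnn : ∀ v, 0 ≤ stdNormalPDF v := fun v => (hφpos v).le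
  have hφcont : Continuous stdNormalPDF := by
    unfold stdNormalPDF; fun_prop
  have hKcont : Continuous K :=
    hφcont.mul (Real.continuous_exp.comp (continuous_const.mul continuous_abs))
  have hkcont : Continuous k :=
    hφcont.mul (Real.continuous_exp.comp ((continuous_const.mul continuous_abs).neg))
  have hKnn : ∀ v, 0 ≤ K v := fun v => mul_nonneg (hφnn v) (Real.exp_pos _).le
  have hknn : ∀ v, 0 ≤ k v := fun v => mul_nonneg (hφnn v) (Real.exp_pos _).le
  have hkpos : ∀ v, 0 < k v := fun v => mul_pos (hφpos v) (Real.exp_pos _)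
  -- integrability of K
  have hKint : Integrable K := by
    apply Integrable.mono'
      (((integrable_exp_neg_mul_sq (show (0:ℝ) < 1/4 by norm_num)).const_mul
        ((Real.sqrt (2 * Real.pi))⁻¹ * Real.exp (Λ ^ 2))))
      hKcont.aestronglyMeasurable
    filter_upwards with v
    rw [Real.norm_eq_abs, abs_of_nonneg (hKnn v)]
    have h1 : -v ^ 2 / 2 + Λ * |v| ≤ Λ ^ 2 + -(1/4) * v ^ 2 := by
      nlinarith [sq_nonneg (Λ - |v| / 2), sq_abs v]
    calc K v = (Real.sqrt (2 * Real.pi))⁻¹ * Real.exp (-v ^ 2 / 2 + Λ * |v|) := by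
          simp [hKdef, stdNormalPDF, Real.exp_add, mul_assoc]
      _ ≤ (Real.sqrt (2 * Real.pi))⁻¹ * Real.exp (Λ ^ 2 + -(1/4) * v ^ 2) := by
          exact mul_le_mul_of_nonneg_left (Real.exp_le_exp.2 h1) (by positivity)
      _ = (Real.sqrt (2 * Real.pi))⁻¹ * Real.exp (Λ ^ 2) * Real.exp (-(1/4) * v ^ 2) := by
          rw [Real.exp_add]; ring
  have hkleK : ∀ v, k v ≤ K v := fun v => by
    have : Real.exp (-(Λ * |v|)) ≤ Real.exp (Λ * |v|) :=
      Real.exp_le_exp.2 (by nlinarith [abs_nonneg v])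
    exact mul_le_mul_of_nonneg_left this (hφnn v)
  have hkint : Integrable k := by
    apply hKint.mono' hkcont.aestronglyMeasurable
    filter_upwards with v
    rw [Real.norm_eq_abs, abs_of_nonneg (hknn v)]
    exact hkleK v
  -- positivity of c
  have hc_pos : 0 < ∫ v, k v := by
    rw [integral_pos_iff_support_of_nonneg (fun v => hknn v) hkint]
    have : Function.support k = Set.univ := by
      ext v; simp [Function.mem_support, (hkpos v).ne']
    rw [this]
    simp
  have hcC : (∫ v, k v) ≤ ∫ v, K v :=
    integral_mono hkint hKint hkleK
  refine ⟨∫ v, k v, ∫ v, K v, hc_pos, hcC, ?_⟩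
  intro x _
  -- integrability of shifted kernels
  have hKx : Integrable (fun u => γ x * K (x - u)) :=
    (((integrable_comp_sub_left K x).2 hKint).const_mul _)
  have hkx : Integrable (fun u => γ x * k (x - u)) :=
    (((integrable_comp_sub_left k x).2 hkint).const_mul _)
  have hub : ∀ u, stdNormalPDF (x - u) * γ u ≤ γ x * K (x - u) := by
    intro u
    calc stdNormalPDF (x - u) * γ u
        ≤ stdNormalPDF (x - u) * (γ x * Real.exp (Λ * |x - u|)) :=
          mul_le_mul_of_nonneg_left (hcomp x u).2 (hφnn _)
      _ = γ x * K (x - u) := by simp [hKdef]; ring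
  have hlbp : ∀ u, γ x * k (x - u) ≤ stdNormalPDF (x - u) * γ u := by
    intro u
    calc γ x * k (x - u) = stdNormalPDF (x - u) * (γ x * Real.exp (-(Λ * |x - u|))) := by
          simp [hkdef]; ring
      _ ≤ stdNormalPDF (x - u) * γ u :=
          mul_le_mul_of_nonneg_left (hcomp x u).1 (hφnn _)
  have hfm : AEStronglyMeasurable (fun u => stdNormalPDF (x - u) * γ u) volume :=
    ((hφcont.comp (continuous_const.sub continuous_id)).mul hγcont).aestronglyMeasurable
  have hfint : Integrable (fun u => stdNormalPDF (x - u) * γ u) := by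
    apply hKx.mono' hfm
    filter_upwards with u
    rw [Real.norm_eq_abs, abs_of_nonneg (mul_nonneg (hφnn _) (hγpos u).le)]
    exact hub u
  have hKeq : (∫ u, γ x * K (x - u)) = (∫ v, K v) * γ x := by
    rw [integral_const_mul, integral_sub_left_eq_self K volume x, mul_comm]
  have hkeq : (∫ u, γ x * k (x - u)) = (∫ v, k v) * γ x := by
    rw [integral_const_mul, integral_sub_left_eq_self k volume x, mul_comm]
  constructor
  · rw [hg x, ← hkeq]
    exact integral_mono_of_nonneg
      (Filter.Eventually.of_forall fun u => mul_nonneg (hγpos x).le (hknn _))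
      hfint (Filter.Eventually.of_forall hlbp)
  · rw [hg x, ← hKeq]
    exact integral_mono_of_nonneg
      (Filter.Eventually.of_forall fun u => mul_nonneg (hφnn _) (hγpos u).le)
      hKx (Filter.Eventually.of_forall hub)
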